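/- Let H be a finite simple graph with at least one edge and let G = KG(H) be the complement of the line graph of H. Then the local chromatic number of G equals its chromatic number: ψ(G) = χ(G). -/

import Mathlib

open SimpleGraph

/-- `KG H` is the complement of the line graph of `H`: its vertices are the edges of `H`,
two of them being adjacent exactly when the corresponding edges of `H` are disjoint. -/
def KG {V : Type*} (H : SimpleGraph V) : SimpleGraph H.edgeSet where
  Adj e f := e ≠ f ∧ ∀ v, v ∈ (e : Sym2 V) → v ∉ (f : Sym2 V)
  symm := by
    constructor
    rintro e f ⟨hne, h⟩
    exact ⟨hne.symm, fun v hvf hve => h v hve hvf⟩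
  loopless := by
    constructor
    rintro e ⟨hne, -⟩
    exact hne rfl

/-- A proper coloring of a graph with colors in `ℕ`. -/
def IsProperColoring {W : Type*} (G : SimpleGraph W) (c : W → ℕ) : Prop :=
  ∀ ⦃u v⦄, G.Adj u v → c u ≠ c v

/-- The chromatic number: least `n` such that `G` has a proper coloring with `n` colors. -/
noncomputable def chromNum {W : Type*} (G : SimpleGraph W) : ℕ :=
  sInf {n | G.Colorable n}

/-- Number of colors appearing on the closed neighborhood of `v` under the coloring `c`. -/
noncomputable def closedNbhdColors {W : Type*} (G : SimpleGraph W) (c : W → ℕ) (v : W) : ℕ :=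
  (c '' {u | u = v ∨ G.Adj v u}).ncard

/-- The local chromatic number: the minimum over proper colorings of the maximum
number of colors in a closed neighborhood. -/
noncomputable def localChromNum {W : Type*} (G : SimpleGraph W) : ℕ :=
  sInf {t | ∃ c : W → ℕ, IsProperColoring G c ∧ ∀ v, closedNbhdColors G c v ≤ t}

namespace KGaux
variable {V : Type*} {H : SimpleGraph V}

/-- disjointness of two edges -/
def Dj (e f : H.edgeSet) : Prop := ∀ v, v ∈ (e : Sym2 V) → v ∉ (f : Sym2 V)

lemma dj_symm {e f : H.edgeSet} (h : Dj e f) : Dj f e := fun v hvf hve => h v hve hvf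

lemma not_dj_self (e : H.edgeSet) : ¬ Dj e e := fun h =>
  h _ (Sym2.out_fst_mem (e : Sym2 V)) (Sym2.out_fst_mem (e : Sym2 V))

lemma meets_of_not_dj {e f : H.edgeSet} (h : ¬ Dj e f) :
    ∃ v, v ∈ (e : Sym2 V) ∧ v ∈ (f : Sym2 V) := by
  unfold Dj at h; push_neg at h; exact h

/-- the colors on the closed neighborhood of `e` -/
def A (c : H.edgeSet → ℕ) (e : H.edgeSet) : Set ℕ :=
  c '' {f | f = e ∨ Dj e f}

lemma cf_mem_A (c : H.edgeSet → ℕ) (e : H.edgeSet) : c e ∈ A c e :=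
  ⟨e, Or.inl rfl, rfl⟩

lemma mem_A_of_dj (c : H.edgeSet → ℕ) {e f : H.edgeSet} (h : Dj e f) : c f ∈ A c e :=
  ⟨f, Or.inr h, rfl⟩

lemma A_finite (c : H.edgeSet → ℕ) (e : H.edgeSet) [Finite V] : (A c e).Finite :=
  Set.Finite.image _ (Set.toFinite _)

/-- same-colored distinct edges intersect -/
lemma not_dj_of_same_color {c : H.edgeSet → ℕ} (hc : IsProperColoring (KG H) c)
    {e f : H.edgeSet} (hne : e ≠ f) (hcol : c e = c f) : ¬ Dj e f :=
  fun h => hc ⟨hne, h⟩ hcol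

lemma eq_sym2_of_mem_mem {a b : V} {z : Sym2 V} (hab : a ≠ b) (ha : a ∈ z) (hb : b ∈ z) :
    z = s(a, b) := by
  obtain ⟨y, rfl⟩ := Sym2.mem_iff_exists.mp ha
  rcases Sym2.mem_iff.mp hb with h | h
  · exact absurd h.symm hab
  · rw [h]
end KGaux

namespace KGaux
variable {V : Type*} {H : SimpleGraph V} {c : H.edgeSet → ℕ}

/-- L1: a nonempty color class all whose edges meet a fixed edge `e₀` not of that color
is contained in a star. -/
lemma exists_star (hc : IsProperColoring (KG H) c) (e₀ : H.edgeSet) (κ : ℕ)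
    (hne : c e₀ ≠ κ) (hpin : ∀ g, c g = κ → ¬ Dj e₀ g) :
    ∃ u : V, ∀ g, c g = κ → u ∈ (g : Sym2 V) := by
  classical
  set a := ((e₀ : Sym2 V)).out.1 with ha_def
  have ha : a ∈ (e₀ : Sym2 V) := Sym2.out_fst_mem _
  obtain ⟨b, hab⟩ := Sym2.mem_iff_exists.mp ha
  have hanb : a ≠ b := by
    intro h
    exact H.not_isDiag_of_mem_edgeSet e₀.2 (by rw [hab, h]; exact Sym2.mk_isDiag_iff.mpr rfl)
  by_cases hA : ∀ g, c g = κ → a ∈ (g : Sym2 V)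
  · exact ⟨a, hA⟩
  push_neg at hA
  obtain ⟨g₁, hg₁, ha1⟩ := hA
  obtain ⟨v, hv₀, hv₁⟩ := meets_of_not_dj (hpin g₁ hg₁)
  have hb1 : b ∈ (g₁ : Sym2 V) := by
    rw [hab, Sym2.mem_iff] at hv₀
    rcases hv₀ with rfl | rfl
    · exact absurd hv₁ ha1
    · exact hv₁
  obtain ⟨z, hzrep⟩ := Sym2.mem_iff_exists.mp hb1
  have hza : z ≠ a := by rintro rfl; exact ha1 (by rw [hzrep]; simp)
  by_cases hB : ∀ g, c g = κ → b ∈ (g : Sym2 V)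
  · exact ⟨b, hB⟩
  push_neg at hB
  obtain ⟨g₂, hg₂, hb2⟩ := hB
  obtain ⟨w, hw₀, hw₂⟩ := meets_of_not_dj (hpin g₂ hg₂)
  have ha2 : a ∈ (g₂ : Sym2 V) := by
    rw [hab, Sym2.mem_iff] at hw₀
    rcases hw₀ with rfl | rfl
    · exact hw₂
    · exact absurd hw₂ hb2
  have hg12 : g₁ ≠ g₂ := by
    rintro rfl; exact ha1 ha2
  obtain ⟨v', hv'₁, hv'₂⟩ := meets_of_not_dj
    (not_dj_of_same_color hc hg12 (hg₁.trans hg₂.symm))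
  have hz2 : z ∈ (g₂ : Sym2 V) := by
    rw [hzrep, Sym2.mem_iff] at hv'₁
    rcases hv'₁ with rfl | rfl
    · exact absurd hv'₂ hb2
    · exact hv'₂
  refine ⟨z, fun g hg => ?_⟩
  by_contra hzg
  -- g meets g₁ = s(b,z), so b ∈ g
  have hbg : b ∈ (g : Sym2 V) := by
    by_cases h1 : g = g₁
    · subst h1
      exact absurd (by rw [hzrep]; simp) hzg
    obtain ⟨p, hpg, hp₁⟩ := meets_of_not_dj (not_dj_of_same_color hc h1 (hg.trans hg₁.symm))
    rw [hzrep, Sym2.mem_iff] at hp₁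
    rcases hp₁ with rfl | rfl
    · exact hpg
    · exact absurd hpg hzg
  -- g meets g₂ = s(a,z), so a ∈ g
  have hag : a ∈ (g : Sym2 V) := by
    by_cases h2 : g = g₂
    · subst h2; exact ha2
    obtain ⟨q, hqg, hq₂⟩ := meets_of_not_dj (not_dj_of_same_color hc h2 (hg.trans hg₂.symm))
    have hg₂rep : (g₂ : Sym2 V) = s(a, z) := eq_sym2_of_mem_mem (Ne.symm hza) ha2 hz2
    rw [hg₂rep, Sym2.mem_iff] at hq₂
    rcases hq₂ with rfl | rfl
    · exact hqg
    · exact absurd hqg hzg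
  have : g = e₀ := Subtype.ext (by rw [hab]; exact eq_sym2_of_mem_mem hanb hag hbg)
  subst this
  exact hne hg
end KGaux

namespace KGaux
variable {V : Type*} {H : SimpleGraph V} {c : H.edgeSet → ℕ}

/-- GVL: if some color class is contained in the star at `u`, then (assuming no two color
classes are mergeable and the local bound `t+1`) deleting `u` drops every local count. -/
lemma good_vertex [Finite V] (hc : IsProperColoring (KG H) c) {t : ℕ}
    (hb : ∀ e, (A c e).ncard ≤ t + 1)
    (hnm : ∀ κ₁ κ₂, κ₁ ≠ κ₂ → (∃ e, c e = κ₁) → (∃ e, c e = κ₂) →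
      ∃ e₁ e₂, c e₁ = κ₁ ∧ c e₂ = κ₂ ∧ Dj e₁ e₂)
    {κ : ℕ} {u : V} (hstar : ∀ g, c g = κ → u ∈ (g : Sym2 V)) (hused : ∃ g, c g = κ)
    {f : H.edgeSet} (hf : u ∉ (f : Sym2 V)) :
    (c '' {g | u ∉ (g : Sym2 V) ∧ (g = f ∨ Dj f g)}).ncard ≤ t := by
  classical
  by_contra hcon
  push_neg at hcon
  set A' : Set ℕ := c '' {g | u ∉ (g : Sym2 V) ∧ (g = f ∨ Dj f g)} with hA'def
  have hsub : A' ⊆ A c f := Set.image_mono (fun g hg => hg.2)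
  have hcard' : t + 1 ≤ A'.ncard := hcon
  have hAfcard : (A c f).ncard = t + 1 :=
    le_antisymm (hb f) (hcard'.trans (Set.ncard_le_ncard hsub (A_finite c f)))
  have hAeq : A' = A c f :=
    Set.eq_of_subset_of_ncard_le hsub (by omega) (A_finite c f)
  -- κ is not a color near f
  have hκf : κ ∉ A c f := by
    rw [← hAeq]
    rintro ⟨g, hgidx, hgc⟩
    exact hgidx.1 (hstar g hgc)
  set μ := c f with hμdef
  have hμf : μ ∈ A c f := cf_mem_A c f
  have hμκ : κ ≠ μ := fun h => hκf (h ▸ hμf)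
  obtain ⟨e₁, e₂, he₁, he₂, hdj⟩ := hnm κ μ hμκ hused ⟨f, rfl⟩
  -- e₁ = s(u, w) with w ∈ f
  have hue₁ : u ∈ (e₁ : Sym2 V) := hstar e₁ he₁
  obtain ⟨w, hwrep⟩ := Sym2.mem_iff_exists.mp hue₁
  have hnd : ¬ Dj f e₁ := fun h => hκf (he₁ ▸ mem_A_of_dj c h)
  obtain ⟨v, hvf, hve₁⟩ := meets_of_not_dj hnd
  have hwf : w ∈ (f : Sym2 V) := by
    rw [hwrep, Sym2.mem_iff] at hve₁
    rcases hve₁ with rfl | rfl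
    · exact absurd hvf hf
    · exact hvf
  -- the color set near e₁ is exactly insert κ (A c f \ {μ})
  have hsub₁ : insert κ (A c f \ {μ}) ⊆ A c e₁ := by
    rintro α (rfl | ⟨hα, hαμ⟩)
    · exact he₁ ▸ cf_mem_A c e₁
    · rw [← hAeq] at hα
      obtain ⟨g, ⟨hug, hgf⟩, hgc⟩ := hα
      rcases hgf with rfl | hgf
      · exact absurd hgc.symm (by simpa using hαμ)
      · refine hgc ▸ mem_A_of_dj c ?_
        intro x hx
        rw [hwrep, Sym2.mem_iff] at hx
        rcases hx with rfl | rfl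
        · exact hug
        · exact hgf x hwf
  have hcard₁ : (insert κ (A c f \ {μ})).ncard = t + 1 := by
    rw [Set.ncard_insert_of_notMem (fun h => hκf h.1) ((A_finite c f).diff),
      Set.ncard_sdiff_singleton_of_mem hμf, hAfcard]
    omega
  have heq₁ : insert κ (A c f \ {μ}) = A c e₁ :=
    Set.eq_of_subset_of_ncard_le hsub₁ (by rw [hcard₁]; exact hb e₁) (A_finite c e₁)
  have hμe₁ : μ ∈ A c e₁ := he₂ ▸ mem_A_of_dj c hdj
  rw [← heq₁] at hμe₁
  rcases hμe₁ with h | h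
  · exact hμκ h.symm
  · exact h.2 rfl
end KGaux

namespace KGaux
variable {V : Type*} [Fintype V]

lemma key : ∀ (t : ℕ) (H : SimpleGraph V) (c : H.edgeSet → ℕ),
    IsProperColoring (KG H) c → (∀ e, (A c e).ncard ≤ t) → (KG H).Colorable t := by
  intro t
  induction t with
  | zero =>
    intro H c hc hb
    have hempty : IsEmpty H.edgeSet := by
      by_contra h
      rw [not_isEmpty_iff] at h
      obtain ⟨e⟩ := h
      have h1 : 0 < (A c e).ncard := Set.ncard_pos (A_finite c e) |>.mpr ⟨_, cf_mem_A c e⟩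
      have := hb e; omega
    exact ⟨SimpleGraph.Coloring.mk (fun e => isEmptyElim e) (fun {a b} _ => isEmptyElim a)⟩
  | succ t ih =>
    suffices key2 : ∀ (n : ℕ) (H : SimpleGraph V) (c : H.edgeSet → ℕ),
        IsProperColoring (KG H) c → (∀ e, (A c e).ncard ≤ t + 1) →
        (Set.range c).ncard ≤ n → (KG H).Colorable (t + 1) by
      intro H c hc hb
      exact key2 _ H c hc hb le_rfl
    intro n
    induction n with
    | zero =>
      intro H c hc hb hn
      have hempty : IsEmpty H.edgeSet := by
        by_contra h
        rw [not_isEmpty_iff] at h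
        obtain ⟨e⟩ := h
        have h1 : 0 < (Set.range c).ncard :=
          Set.ncard_pos (Set.finite_range c) |>.mpr ⟨_, ⟨e, rfl⟩⟩
        omega
      exact ⟨SimpleGraph.Coloring.mk (fun e => isEmptyElim e) (fun {a b} _ => isEmptyElim a)⟩
    | succ n ihn =>
      intro H c hc hb hn
      by_cases hle : (Set.range c).ncard ≤ n
      · exact ihn H c hc hb hle
      by_cases hsmall : (Set.range c).ncard ≤ t + 1
      · -- at most t+1 colors are used: color by the color classes
        classical
        haveI : Fintype (Set.range c) := (Set.finite_range c).fintype
        have hcard : Fintype.card (Set.range c) ≤ t + 1 := by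
          rw [← Set.toFinset_card, ← Set.ncard_eq_toFinset_card']
          exact hsmall
        refine ⟨SimpleGraph.Coloring.mk
          (fun e => Fin.castLE hcard ((Fintype.equivFin (Set.range c)) ⟨c e, ⟨e, rfl⟩⟩))
          (fun {e f} hadj heq => ?_)⟩
        have h1 := Fin.castLE_injective hcard heq
        have h2 := (Fintype.equivFin (Set.range c)).injective h1
        exact hc hadj (congrArg Subtype.val h2)
      · by_cases hmerge : ∃ κ₁ κ₂, κ₁ ≠ κ₂ ∧ (∃ e, c e = κ₁) ∧ (∃ e, c e = κ₂) ∧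
            ∀ e₁ e₂, c e₁ = κ₁ → c e₂ = κ₂ → ¬ Dj e₁ e₂
        · -- merge the two classes
          classical
          obtain ⟨κ₁, κ₂, hκne, ⟨ea, hea⟩, ⟨eb, heb⟩, hmer⟩ := hmerge
          set m : ℕ → ℕ := fun α => if α = κ₂ then κ₁ else α with hm
          set c' : H.edgeSet → ℕ := fun e => m (c e) with hc'
          have hproper' : IsProperColoring (KG H) c' := by
            intro e f hadj heq
            simp only [hc', hm] at heq
            split_ifs at heq with h1 h2 h2
            · exact hc hadj (h1.trans h2.symm)
            · exact hmer f e heq.symm h1 (dj_symm hadj.2)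
            · exact hmer e f heq h2 hadj.2
            · exact hc hadj heq
          have hb' : ∀ e, (A c' e).ncard ≤ t + 1 := by
            intro e
            have himg : A c' e = m '' (A c e) := by
              unfold A
              rw [← Set.image_comp]; rfl
            rw [himg]
            exact (Set.ncard_image_le (A_finite c e)).trans (hb e)
          have hrange' : (Set.range c').ncard ≤ n := by
            have hsub : Set.range c' ⊆ Set.range c \ {κ₂} := by
              rintro α ⟨e, rfl⟩
              simp only [hc', hm]
              split_ifs with h1
              · exact ⟨⟨ea, hea⟩, by simpa using hκne⟩
              · exact ⟨⟨e, rfl⟩, by simpa using h1⟩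
            have h2 : (Set.range c \ {κ₂}).ncard = (Set.range c).ncard - 1 :=
              Set.ncard_sdiff_singleton_of_mem ⟨eb, heb⟩
            have h3 := Set.ncard_le_ncard hsub ((Set.finite_range c).diff)
            omega
          exact ihn H c' hproper' hb' hrange'
        · -- no mergeable pair: find a good vertex and recurse on t
          push_neg at hmerge
          have hbig : t + 2 ≤ (Set.range c).ncard := by omega
          have hne0 : (Set.range c).ncard ≠ 0 := by omega
          obtain ⟨α₀, e₀, rfl⟩ := Set.nonempty_of_ncard_ne_zero hne0
          have hnotsub : ¬ Set.range c ⊆ A c e₀ := by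
            intro hsub
            have h1 := Set.ncard_le_ncard hsub (A_finite c e₀)
            have h2 := hb e₀
            omega
          obtain ⟨κ, hκrange, hκA⟩ := Set.not_subset.mp hnotsub
          have hceκ : c e₀ ≠ κ := fun h => hκA (h ▸ cf_mem_A c e₀)
          have hpin : ∀ g, c g = κ → ¬ Dj e₀ g := fun g hg hdj =>
            hκA (hg ▸ mem_A_of_dj c hdj)
          obtain ⟨u, hstar⟩ := exists_star hc e₀ κ hceκ hpin
          -- the graph with u's edges removed
          set H' : SimpleGraph V :=
            { Adj := fun p q => H.Adj p q ∧ p ≠ u ∧ q ≠ u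
              symm := by constructor; rintro p q ⟨h1, h2, h3⟩; exact ⟨h1.symm, h3, h2⟩
              loopless := by constructor; rintro p ⟨h1, -, -⟩; exact H.loopless.irrefl p h1 } with hH'
          have hinc : ∀ z : Sym2 V, z ∈ H'.edgeSet → z ∈ H.edgeSet ∧ u ∉ z := by
            intro z
            induction z using Sym2.ind with
            | _ p q =>
              intro hz
              rw [SimpleGraph.mem_edgeSet] at hz
              refine ⟨(SimpleGraph.mem_edgeSet H).mpr hz.1, ?_⟩
              rw [Sym2.mem_iff]
              rintro (rfl | rfl)
              · exact hz.2.1 rfl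
              · exact hz.2.2 rfl
          have hinc' : ∀ z : Sym2 V, z ∈ H.edgeSet → u ∉ z → z ∈ H'.edgeSet := by
            intro z
            induction z using Sym2.ind with
            | _ p q =>
              intro hz hu
              rw [Sym2.mem_iff] at hu
              push_neg at hu
              exact (SimpleGraph.mem_edgeSet H').mpr
                ⟨(SimpleGraph.mem_edgeSet H).mp hz, fun h => hu.1 h.symm, fun h => hu.2 h.symm⟩
          set ι : H'.edgeSet → H.edgeSet := fun g' => ⟨g'.1, (hinc g'.1 g'.2).1⟩ with hι
          set c' : H'.edgeSet → ℕ := fun g' => c (ι g') with hcdef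
          have hproper' : IsProperColoring (KG H') c' := by
            rintro e' f' ⟨hne, hdj⟩
            refine hc ⟨fun h => hne ?_, hdj⟩
            have h3 := congrArg Subtype.val h
            exact Subtype.ext h3
          have hb' : ∀ f', (A c' f').ncard ≤ t := by
            intro f'
            have hsub : A c' f' ⊆ c '' {g | u ∉ (g : Sym2 V) ∧ (g = ι f' ∨ Dj (ι f') g)} := by
              rintro α ⟨g', hidx, rfl⟩
              refine ⟨ι g', ⟨(hinc g'.1 g'.2).2, ?_⟩, rfl⟩
              rcases hidx with rfl | hdj
              · exact Or.inl rfl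
              · exact Or.inr hdj
            refine (Set.ncard_le_ncard hsub (Set.Finite.image _ (Set.toFinite _))).trans ?_
            exact good_vertex hc hb hmerge hstar
              (by obtain ⟨g₀, hg₀⟩ := hκrange; exact ⟨g₀, hg₀⟩)
              ((hinc f'.1 f'.2).2)
          obtain ⟨C'⟩ := ih H' c' hproper' hb'
          classical
          refine ⟨SimpleGraph.Coloring.mk
            (fun e => if h : u ∈ (e : Sym2 V) then (0 : Fin (t + 1))
              else (C' ⟨e.1, hinc' e.1 e.2 h⟩).succ)
            (fun {e f} hadj heq => ?_)⟩
          obtain ⟨hne, hdj⟩ := hadj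
          by_cases hue : u ∈ (e : Sym2 V) <;> by_cases huf : u ∈ (f : Sym2 V)
          · exact hdj u hue huf
          · simp only [dif_pos hue, dif_neg huf] at heq
            exact Fin.succ_ne_zero _ heq.symm
          · simp only [dif_neg hue, dif_pos huf] at heq
            exact Fin.succ_ne_zero _ heq
          · simp only [dif_neg hue, dif_neg huf] at heq
            have h2 := Fin.succ_inj.mp heq
            refine C'.valid ⟨fun h => hne ?_, hdj⟩ h2
            have h3 := congrArg Subtype.val h
            exact Subtype.ext h3
end KGaux

namespace KGaux
variable {V : Type*} {H : SimpleGraph V}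

lemma closed_eq (c : H.edgeSet → ℕ) (e : H.edgeSet) :
    closedNbhdColors (KG H) c e = (A c e).ncard := by
  have hset : {u | u = e ∨ (KG H).Adj e u} = {f | f = e ∨ Dj e f} := by
    ext f
    simp only [Set.mem_setOf_eq]
    constructor
    · rintro (rfl | ⟨hne, hdj⟩)
      · exact Or.inl rfl
      · exact Or.inr hdj
    · rintro (rfl | hdj)
      · exact Or.inl rfl
      · exact Or.inr ⟨fun h => not_dj_self f (h ▸ hdj), hdj⟩
  unfold closedNbhdColors A
  rw [hset]
end KGaux

/-- For the complement of a line graph, the local chromatic number equals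
the chromatic number. -/
theorem localChromNum_KG_eq_chromNum {V : Type*} [Fintype V] (H : SimpleGraph V)
    (hE : H.edgeSet.Nonempty) :
    localChromNum (KG H) = chromNum (KG H) := by
  classical
  haveI : Fintype H.edgeSet := (H.edgeSet.toFinite).fintype
  have hchne : {n | (KG H).Colorable n}.Nonempty := ⟨_, (KG H).colorable_of_fintype⟩
  have hccol : (KG H).Colorable (chromNum (KG H)) := Nat.sInf_mem hchne
  obtain ⟨C⟩ := hccol
  set c : H.edgeSet → ℕ := fun e => (C e : ℕ) with hcdef
  have hproper : IsProperColoring (KG H) c := fun u v hadj h =>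
    C.valid hadj (Fin.val_injective h)
  have hbound : ∀ v, closedNbhdColors (KG H) c v ≤ chromNum (KG H) := by
    intro v
    rw [KGaux.closed_eq]
    have hsub : KGaux.A c v ⊆ Set.Iio (chromNum (KG H)) := by
      rintro α ⟨g, hg, rfl⟩
      exact (C g).isLt
    calc (KGaux.A c v).ncard ≤ (Set.Iio (chromNum (KG H))).ncard :=
          Set.ncard_le_ncard hsub (Set.finite_Iio _)
      _ = chromNum (KG H) := by
          rw [← Finset.coe_range, Set.ncard_coe_finset, Finset.card_range]
  have hmem : chromNum (KG H) ∈
      {t | ∃ c : H.edgeSet → ℕ, IsProperColoring (KG H) c ∧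
        ∀ v, closedNbhdColors (KG H) c v ≤ t} := ⟨c, hproper, hbound⟩
  have h1 : localChromNum (KG H) ≤ chromNum (KG H) := Nat.sInf_le hmem
  have hSne : Set.Nonempty {t | ∃ c : H.edgeSet → ℕ, IsProperColoring (KG H) c ∧
      ∀ v, closedNbhdColors (KG H) c v ≤ t} := ⟨_, hmem⟩
  obtain ⟨c₀, hp₀, hb₀⟩ := Nat.sInf_mem hSne
  have hb₀' : ∀ e, (KGaux.A c₀ e).ncard ≤ localChromNum (KG H) := by
    intro e
    rw [← KGaux.closed_eq]
    exact hb₀ e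
  have hcolor : (KG H).Colorable (localChromNum (KG H)) :=
    KGaux.key (localChromNum (KG H)) H c₀ hp₀ hb₀'
  exact le_antisymm h1 (Nat.sInf_le hcolor)
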